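/- Let f ∈ ℂ{x,y} be reduced with {ω₁ = A₁dx + B₁dy, ω₂ = A₂dx + B₂dy} a Saito basis of S(f), with cofactors h₁, h₂ (ωᵢ ∧ df = hᵢ f dx∧dy). Suppose α = ord(A₁(x,0)) ≤ ord(A₂(x,0)), where A₁(x,0) ≠ 0. Then η₁ := (A₂(x,0)/x^α)·ω₁ − (A₁(x,0)/x^α)·ω₂ and η₂ := y·ω₁ form a Saito basis of S(y·f), and η₂ ∧ d(yf) = (y·h₁ + A₁)·y·f·dx∧dy. -/

import Mathlib

open MvPowerSeries

noncomputable section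

/-- `ℂ{x,y}`, modeled as formal power series in two variables. -/
abbrev PS := MvPowerSeries (Fin 2) ℂ

/-- Formal partial derivative with respect to variable `i`. -/
noncomputable def pd (i : Fin 2) (f : PS) : PS :=
  fun m => ((m i : ℂ) + 1) * MvPowerSeries.coeff (m + Finsupp.single i 1) f

/-- The pair `(f_x, f_y)` representing the differential `df = f_x dx + f_y dy`;
a 1-form `A dx + B dy` is modeled as the pair `(A, B)`. -/
noncomputable def dd (f : PS) : PS × PS := (pd 0 f, pd 1 f)

/-- `(A dx + B dy) ∧ (C dx + D dy) = (A D - B C) dx∧dy`, recorded by its coefficient. -/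
def wedge (ω η : PS × PS) : PS := ω.1 * η.2 - ω.2 * η.1

/-- The Saito module `S(f)`: 1-forms `ω` with `ω ∧ df = h·f·dx∧dy` for some `h`. -/
def SaitoSet (f : PS) : Set (PS × PS) := {ω | ∃ h : PS, wedge ω (dd f) = h * f}

/-- `F(f) = ℂ{x,y}·df + f·Ω¹`. -/
def FSet (f : PS) : Set (PS × PS) := {ω | ∃ (p : PS) (η : PS × PS), ω = p • dd f + f • η}

/-- The substitution `y = 0` in a power series, leaving a series in `x` only. -/
noncomputable def subY0 (f : PS) : PS :=
  fun m => if m 1 = 0 then MvPowerSeries.coeff m f else 0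

lemma coeff_pd (i : Fin 2) (f : PS) (m : Fin 2 →₀ ℕ) :
    MvPowerSeries.coeff m (pd i f) =
      ((m i : ℂ) + 1) * MvPowerSeries.coeff (m + Finsupp.single i 1) f := rfl

lemma coeff_X1_mul (g : PS) (m : Fin 2 →₀ ℕ) :
    MvPowerSeries.coeff m ((X 1 : PS) * g) =
      if m 1 = 0 then 0 else MvPowerSeries.coeff (m - Finsupp.single 1 1) g := by
  rw [X_def, coeff_monomial_mul]
  by_cases h : m 1 = 0
  · rw [if_pos h, if_neg (fun hle => by
      have := Finsupp.single_le_iff.mp hle; omega)]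
  · rw [if_neg h, if_pos (Finsupp.single_le_iff.mpr (Nat.one_le_iff_ne_zero.mpr h)), one_mul]

lemma swap01 (m : Fin 2 →₀ ℕ) :
    m + Finsupp.single 0 1 - Finsupp.single 1 1
      = m - Finsupp.single 1 1 + Finsupp.single 0 1 := by
  ext i
  fin_cases i <;>
    simp [Finsupp.tsub_apply, Finsupp.add_apply, Finsupp.single_apply]

lemma pd0_X1_mul (f : PS) : pd 0 ((X 1 : PS) * f) = (X 1 : PS) * pd 0 f := by
  ext m
  rw [coeff_pd, coeff_X1_mul, coeff_X1_mul]
  have h1 : (m + Finsupp.single (0 : Fin 2) (1 : ℕ)) 1 = m 1 := by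
    simp [Finsupp.add_apply, Finsupp.single_apply]
  by_cases h : m 1 = 0
  · rw [if_pos (h1.trans h), if_pos h, mul_zero]
  · rw [if_neg (h1 ▸ h), if_neg h, coeff_pd, swap01]
    have h0 : (m - Finsupp.single (1 : Fin 2) (1 : ℕ)) 0 = m 0 := by
      simp [Finsupp.tsub_apply, Finsupp.single_apply]
    rw [h0]

lemma pd1_X1_mul (f : PS) : pd 1 ((X 1 : PS) * f) = f + (X 1 : PS) * pd 1 f := by
  ext m
  rw [coeff_pd, coeff_X1_mul, map_add, coeff_X1_mul]
  have h1 : (m + Finsupp.single (1 : Fin 2) (1 : ℕ)) 1 = m 1 + 1 := by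
    simp [Finsupp.add_apply, Finsupp.single_apply]
  rw [if_neg (by rw [h1]; omega), add_tsub_cancel_right]
  by_cases h : m 1 = 0
  · rw [if_pos h, h]
    push_cast
    ring
  · rw [if_neg h, coeff_pd, tsub_add_cancel_of_le
      (Finsupp.single_le_iff.mpr (Nat.one_le_iff_ne_zero.mpr h))]
    have h2 : (m - Finsupp.single (1 : Fin 2) (1 : ℕ)) 1 = m 1 - 1 := by
      simp [Finsupp.tsub_apply, Finsupp.single_apply]
    rw [h2, Nat.cast_sub (Nat.one_le_iff_ne_zero.mpr h)]
    push_cast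
    ring

lemma exists_X1_factor (g : PS) : ∃ r : PS, g = subY0 g + (X 1 : PS) * r := by
  obtain ⟨r, hr⟩ : ∃ r : PS, ∀ m, MvPowerSeries.coeff m r
      = MvPowerSeries.coeff (m + Finsupp.single 1 1) g :=
    ⟨fun m => MvPowerSeries.coeff (m + Finsupp.single 1 1) g, fun _ => rfl⟩
  refine ⟨r, ?_⟩
  ext m
  rw [map_add, coeff_X1_mul]
  have hs : MvPowerSeries.coeff m (subY0 g)
      = if m 1 = 0 then MvPowerSeries.coeff m g else 0 := rfl
  rw [hs]
  by_cases h : m 1 = 0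
  · rw [if_pos h, if_pos h, add_zero]
  · rw [if_neg h, if_neg h, zero_add]
    rw [hr]
    rw [tsub_add_cancel_of_le (Finsupp.single_le_iff.mpr (Nat.one_le_iff_ne_zero.mpr h))]

theorem saito_basis_of_y_mul (f : PS) (hred : Squarefree ((X 1 : PS) * f))
    (A₁ B₁ A₂ B₂ h₁ h₂ u : PS) (hu : IsUnit u)
    (hω₁ : wedge (A₁, B₁) (dd f) = h₁ * f) (hω₂ : wedge (A₂, B₂) (dd f) = h₂ * f)
    (hbasis : wedge (A₁, B₁) (A₂, B₂) = u * f)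
    (hA₁0 : subY0 A₁ ≠ 0)
    (α : ℕ) (c₁ c₂ : PS)
    (hc₁ : subY0 A₁ = (X 0 : PS) ^ α * c₁) (hc₁u : IsUnit c₁)
    (hc₂ : subY0 A₂ = (X 0 : PS) ^ α * c₂) :
    c₂ • ((A₁, B₁) : PS × PS) - c₁ • ((A₂, B₂) : PS × PS) ∈ SaitoSet ((X 1 : PS) * f) ∧
    (X 1 : PS) • ((A₁, B₁) : PS × PS) ∈ SaitoSet ((X 1 : PS) * f) ∧
    wedge (c₂ • ((A₁, B₁) : PS × PS) - c₁ • ((A₂, B₂) : PS × PS))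
        ((X 1 : PS) • ((A₁, B₁) : PS × PS)) = (c₁ * u) * ((X 1 : PS) * f) ∧
    IsUnit (c₁ * u) ∧
    wedge ((X 1 : PS) • ((A₁, B₁) : PS × PS)) (dd ((X 1 : PS) * f)) =
      ((X 1 : PS) * h₁ + A₁) * ((X 1 : PS) * f) := by
  obtain ⟨r₁, hr₁⟩ := exists_X1_factor A₁
  obtain ⟨r₂, hr₂⟩ := exists_X1_factor A₂
  rw [hc₁] at hr₁
  rw [hc₂] at hr₂
  have hkey : c₂ * A₁ - c₁ * A₂ = (X 1 : PS) * (c₂ * r₁ - c₁ * r₂) := by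
    rw [hr₁, hr₂]; ring
  simp only [SaitoSet, Set.mem_setOf_eq, wedge, dd, pd0_X1_mul, pd1_X1_mul, Prod.smul_mk, Prod.mk_sub_mk,
    smul_eq_mul] at hω₁ hω₂ hbasis ⊢
  refine ⟨⟨(c₂ * r₁ - c₁ * r₂) + (c₂ * h₁ - c₁ * h₂), ?_⟩,
    ⟨(X 1 : PS) * h₁ + A₁, ?_⟩, ?_, hc₁u.mul hu, ?_⟩
  · linear_combination f * hkey + (X 1 : PS) * c₂ * hω₁ - (X 1 : PS) * c₁ * hω₂
  · linear_combination (X 1 : PS) * (X 1 : PS) * hω₁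
  · linear_combination (X 1 : PS) * c₁ * hbasis
  · linear_combination (X 1 : PS) * (X 1 : PS) * hω₁
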